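/- For the (1,4) spectral curve, define the free energies: F_0(λ,t) = −t⁶/972 + 2λt³/27 − 3λ²/4 + (λ²/4)·log(3λ²), F_1(λ) = −(1/12)·log λ, and for g ≥ 2, F_g(λ) = (B_{2g}/(2g(2g−2)))·λ^{2−2g}, regarded as real-analytic functions of λ > 0 (t ∈ ℝ a parameter); here B_n denotes the n-th Bernoulli number, defined by w/(e^w − 1) = ∑_{n≥0} B_n·w^n/n!. Then for all t ∈ ℝ and λ > 0: (i) F_0''(λ) = (1/2)·log(3λ²) (derivative in λ); and (ii) for every even integer k ≥ 2, ∑ (2/n!)·F_g^{(n)}(λ) = 0, where the sum is over all pairs (g, n) with g ≥ 0, n ≥ 2 even, and 2g − 2 + n = k. Equivalently, the formal series F(λ; ħ) = ∑_{g≥0} ħ^{2g−2}·F_g(λ) satisfies the three-term difference equation F(λ+ħ; ħ) − 2F(λ; ħ) + F(λ−ħ; ħ) = ∂²F_0/∂λ² upon Taylor-expanding each F_g(λ±ħ) in ħ. -/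

import Mathlib

/-- The free energies of the (1,4) spectral curve:
`F₀(λ,t) = −t⁶/972 + 2λt³/27 − 3λ²/4 + (λ²/4)·log(3λ²)`, `F₁(λ) = −(1/12)·log λ`, and
`F_g(λ) = (B_{2g}/(2g(2g−2)))·λ^{2−2g}` for `g ≥ 2`. -/
noncomputable def F14 (t : ℝ) : ℕ → ℝ → ℝ
  | 0 => fun l => -t ^ 6 / 972 + 2 * l * t ^ 3 / 27 - 3 * l ^ 2 / 4
      + l ^ 2 / 4 * Real.log (3 * l ^ 2)
  | 1 => fun l => -(1 / 12) * Real.log l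
  | (g + 2) => fun l =>
      ((bernoulli (2 * (g + 2)) : ℝ) / ((2 * (g + 2) : ℝ) * ((2 * (g + 2) : ℝ) - 2)))
        * l ^ ((2 : ℤ) - 2 * ((g : ℤ) + 2))

namespace FreeEnergy14

open Finset Filter Real

/-! ### Bernoulli-number identity -/

lemma sum_range_two_mul (f : ℕ → ℚ) (n : ℕ) :
    ∑ j ∈ range (2 * n), f j = ∑ g ∈ range n, (f (2 * g) + f (2 * g + 1)) := by
  induction n with
  | zero => simp
  | succ n ih =>
      have h : 2 * (n + 1) = 2 * n + 1 + 1 := by ring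
      rw [h, sum_range_succ, sum_range_succ, ih, sum_range_succ, add_assoc]

lemma bernoulli_odd_zero {n : ℕ} (h : Odd n) (h1 : 1 < n) : bernoulli n = 0 := by
  rw [bernoulli_eq_bernoulli'_of_ne_one (by omega)]
  exact bernoulli'_eq_zero_of_odd h h1

lemma choose_aux (M j : ℕ) (hj : j ≤ M) :
    (M + 1 - j) * (M + 1).choose j = (M + 1) * M.choose j := by
  have h1 : (M + 1).choose (M + 1 - (M + 1 - j)) = (M + 1).choose j := by
    congr 1; omega
  have h1' : (M + 1).choose j = (M + 1).choose (M - j + 1) := by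
    rw [← h1, Nat.choose_symm (by omega : M + 1 - j ≤ M + 1)]
    congr 1; omega
  have h3 := Nat.add_one_mul_choose_eq M (M - j)
  have h4 : M.choose (M - j) = M.choose j := Nat.choose_symm hj
  have h2 : M + 1 - j = M - j + 1 := by omega
  rw [h1', h2]
  calc (M - j + 1) * (M + 1).choose (M - j + 1)
      = (M + 1).choose (M - j + 1) * (M - j + 1) := by ring
    _ = (M + 1) * M.choose (M - j) := by rw [← h3]
    _ = (M + 1) * M.choose j := by rw [h4]

lemma bern_sum (m : ℕ) (hm : 1 ≤ m) :
    ∑ g ∈ range (m + 1),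
      ((2 * g : ℚ) - 1) * ((2 * m + 2).choose (2 * g)) * bernoulli (2 * g) = 0 := by
  have key : ∑ g ∈ range (m + 1),
      ((2 * g : ℚ) - 1) * ((2 * m + 2).choose (2 * g)) * bernoulli (2 * g)
      = ∑ j ∈ range (2 * m + 2), ((j : ℚ) - 1) * ((2 * m + 2).choose j) * bernoulli j := by
    have h2 : 2 * m + 2 = 2 * (m + 1) := by omega
    rw [h2, sum_range_two_mul, ← h2]
    refine (Finset.sum_congr rfl fun g hg => ?_).symm
    have hodd : ((2 * g + 1 : ℚ) - 1) * ((2 * m + 2).choose (2 * g + 1)) * bernoulli (2 * g + 1) = 0 := by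
      rcases Nat.eq_zero_or_pos g with h0 | hpos
      · subst h0; norm_num
      · rw [bernoulli_odd_zero ⟨g, by ring⟩ (by omega)]; ring
    push_cast
    push_cast at hodd
    rw [hodd]; ring
  rw [key]
  have split : ∑ j ∈ range (2 * m + 2), ((j : ℚ) - 1) * ((2 * m + 2).choose j) * bernoulli j
      = (∑ j ∈ range (2 * m + 2), (j : ℚ) * ((2 * m + 2).choose j) * bernoulli j)
        - ∑ j ∈ range (2 * m + 2), (((2 * m + 2).choose j : ℚ)) * bernoulli j := by
    rw [← Finset.sum_sub_distrib]; exact Finset.sum_congr rfl fun j _ => by ring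
  have hsb : ∑ j ∈ range (2 * m + 2), (((2 * m + 2).choose j : ℚ)) * bernoulli j = 0 := by
    rw [sum_bernoulli]; simp
  have hsb' : ∑ j ∈ range (2 * m + 2), (((2 * m + 1).choose j : ℚ)) * bernoulli j = 0 := by
    rw [sum_range_succ, bernoulli_odd_zero ⟨m, by ring⟩ (by omega)]
    rw [sum_bernoulli]
    simp; omega
  have hfirst : ∑ j ∈ range (2 * m + 2), (j : ℚ) * ((2 * m + 2).choose j) * bernoulli j = 0 := by
    have step : ∀ j ∈ range (2 * m + 2), (j : ℚ) * ((2 * m + 2).choose j) * bernoulli j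
        = (2 * m + 2 : ℚ) * (((2 * m + 2).choose j) * bernoulli j)
          - (2 * m + 2 : ℚ) * ((((2 * m + 1).choose j) : ℚ) * bernoulli j) := by
      intro j hj
      have hjle : j ≤ 2 * m + 1 := by
        have := Finset.mem_range.1 hj; omega
      have hca := choose_aux (2 * m + 1) j hjle
      have hcq : ((2 * m + 1 + 1 - j : ℕ) : ℚ) * (((2 * m + 1 + 1).choose j : ℕ) : ℚ)
          = ((2 * m + 1 + 1 : ℕ) : ℚ) * (((2 * m + 1).choose j : ℕ) : ℚ) := by
        exact_mod_cast congrArg (Nat.cast : ℕ → ℚ) hca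
      rw [Nat.cast_sub (by omega : j ≤ 2 * m + 1 + 1)] at hcq
      have he : (2 * m + 1 + 1 : ℕ) = 2 * m + 2 := by omega
      rw [he] at hcq
      push_cast at hcq ⊢
      linear_combination (-(bernoulli j)) * hcq
    rw [Finset.sum_congr rfl step, Finset.sum_sub_distrib, ← Finset.mul_sum, ← Finset.mul_sum,
      hsb, hsb']
    ring
  rw [split, hfirst, hsb]; ring

lemma bern_sum_real (m : ℕ) (hm : 1 ≤ m) :
    ∑ g ∈ range (m + 1),
      ((2 * (g : ℝ)) - 1) * (((2 * m + 2).choose (2 * g) : ℕ) : ℝ)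
        * ((bernoulli (2 * g) : ℚ) : ℝ) = 0 := by
  have h2 := congrArg (fun q : ℚ => (q : ℝ)) (bern_sum m hm)
  push_cast at h2
  convert h2 using 2

/-! ### Iterated-derivative tools -/

lemma iter_ev {f g : ℝ → ℝ} {l : ℝ} (n : ℕ) (h : f =ᶠ[nhds l] g) :
    deriv^[n] f =ᶠ[nhds l] deriv^[n] g := by
  induction n with
  | zero => exact h
  | succ n ih =>
      rw [Function.iterate_succ']
      simp only [Function.comp]
      exact ih.deriv

lemma iter_shift {f g : ℝ → ℝ} {l : ℝ} (h : deriv f =ᶠ[nhds l] g) (n : ℕ) :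
    deriv^[n + 1] f l = deriv^[n] g l := by
  rw [Function.iterate_succ_apply]
  exact (iter_ev n h).eq_of_nhds

lemma iter_deriv_const_mul (c : ℝ) (f : ℝ → ℝ) (n : ℕ) :
    deriv^[n] (fun x => c * f x) = fun x => c * deriv^[n] f x := by
  induction n with
  | zero => rfl
  | succ n ih =>
      rw [Function.iterate_succ']
      simp only [Function.comp, ih]
      exact deriv_const_mul_field' c

lemma prod_desc (b : ℕ) (n : ℕ) :
    ∏ i ∈ range n, (-(b : ℝ) - 1 - (i : ℕ)) =
      (-1) ^ n * ((b + n).factorial : ℝ) / (b.factorial : ℝ) := by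
  induction n with
  | zero => simp [Nat.factorial_ne_zero, div_self, Nat.cast_ne_zero]
  | succ n ih =>
      rw [prod_range_succ, ih, show b + (n + 1) = (b + n) + 1 from rfl, Nat.factorial_succ]
      have hb : (b.factorial : ℝ) ≠ 0 := Nat.cast_ne_zero.2 (Nat.factorial_ne_zero b)
      field_simp
      push_cast
      ring

lemma prod_neg (j : ℕ) :
    ∏ i ∈ range j, (-1 - (i : ℝ)) = (-1) ^ j * (j.factorial : ℝ) := by
  have h := prod_desc 0 j
  simp only [Nat.cast_zero, neg_zero, zero_sub, zero_add, Nat.factorial_zero, Nat.cast_one,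
    div_one] at h
  rw [← h]

/-! ### Derivatives of the genus-0 free energy -/

noncomputable def φ1 (t : ℝ) : ℝ → ℝ :=
  fun x => 2 * t ^ 3 / 27 - x + x / 2 * Real.log (3 * x ^ 2)

noncomputable def φ2 : ℝ → ℝ := fun x => 1 / 2 * Real.log (3 * x ^ 2)

lemma hasDeriv_log3 {x : ℝ} (hx : x ≠ 0) :
    HasDerivAt (fun y : ℝ => Real.log (3 * y ^ 2)) (3 * (2 * x ^ 1) / (3 * x ^ 2)) x := by
  have hp : HasDerivAt (fun y : ℝ => 3 * y ^ 2) (3 * (2 * x ^ 1)) x :=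
    (hasDerivAt_pow 2 x).const_mul 3
  exact hp.log (by positivity)

lemma hasDerivF0 (t : ℝ) {x : ℝ} (hx : 0 < x) : HasDerivAt (F14 t 0) (φ1 t x) x := by
  have hx0 : x ≠ 0 := ne_of_gt hx
  have h_a : HasDerivAt (fun y : ℝ => -t ^ 6 / 972 + 2 * y * t ^ 3 / 27) (2 * 1 * t ^ 3 / 27) x :=
    ((((hasDerivAt_id' (x := x)).const_mul 2).mul_const (t ^ 3)).div_const 27).const_add
      (-t ^ 6 / 972)
  have h_b : HasDerivAt (fun y : ℝ => 3 * y ^ 2 / 4) (3 * (2 * x ^ 1) / 4) x :=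
    ((hasDerivAt_pow 2 x).const_mul 3).div_const 4
  have h_d : HasDerivAt (fun y : ℝ => y ^ 2 / 4 * Real.log (3 * y ^ 2))
      (2 * x ^ 1 / 4 * Real.log (3 * x ^ 2) + x ^ 2 / 4 * (3 * (2 * x ^ 1) / (3 * x ^ 2))) x :=
    ((hasDerivAt_pow 2 x).div_const 4).mul (hasDeriv_log3 hx0)
  have H := (h_a.sub h_b).add h_d
  have h0 : F14 t 0 = fun l => -t ^ 6 / 972 + 2 * l * t ^ 3 / 27 - 3 * l ^ 2 / 4
      + l ^ 2 / 4 * Real.log (3 * l ^ 2) := rfl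
  rw [h0]
  refine H.congr_deriv ?_
  unfold φ1
  field_simp
  ring

lemma hasDerivφ1 (t : ℝ) {x : ℝ} (hx : 0 < x) : HasDerivAt (φ1 t) (φ2 x) x := by
  have hx0 : x ≠ 0 := ne_of_gt hx
  have h1 : HasDerivAt (fun y : ℝ => 2 * t ^ 3 / 27 - y) (0 - 1) x :=
    (hasDerivAt_const x (2 * t ^ 3 / 27)).sub (hasDerivAt_id' (x := x))
  have h2 : HasDerivAt (fun y : ℝ => y / 2 * Real.log (3 * y ^ 2))
      (1 / 2 * Real.log (3 * x ^ 2) + x / 2 * (3 * (2 * x ^ 1) / (3 * x ^ 2))) x :=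
    ((hasDerivAt_id' (x := x)).div_const 2).mul (hasDeriv_log3 hx0)
  have H := h1.add h2
  refine H.congr_deriv ?_
  unfold φ2
  field_simp
  ring

lemma hasDerivφ2 {x : ℝ} (hx : 0 < x) : HasDerivAt (φ2 : ℝ → ℝ) x⁻¹ x := by
  have hx0 : x ≠ 0 := ne_of_gt hx
  have H := (hasDeriv_log3 hx0).const_mul (1 / 2)
  refine H.congr_deriv ?_
  field_simp

lemma Ev1 (t : ℝ) {l : ℝ} (hl : 0 < l) : deriv (F14 t 0) =ᶠ[nhds l] φ1 t :=
  (eventually_gt_nhds hl).mono fun _ hx => (hasDerivF0 t hx).deriv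

lemma Ev2 (t : ℝ) {l : ℝ} (hl : 0 < l) : deriv (φ1 t) =ᶠ[nhds l] φ2 :=
  (eventually_gt_nhds hl).mono fun _ hx => (hasDerivφ1 t hx).deriv

lemma Ev3 {l : ℝ} (hl : 0 < l) : deriv (φ2 : ℝ → ℝ) =ᶠ[nhds l] Inv.inv :=
  (eventually_gt_nhds hl).mono fun _ hx => (hasDerivφ2 hx).deriv

lemma F0_iter (t : ℝ) {l : ℝ} (hl : 0 < l) (j : ℕ) :
    deriv^[j + 3] (F14 t 0) l = (∏ i ∈ range j, (-1 - (i : ℝ))) * l ^ (-1 - (j : ℤ)) := by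
  have h1 : deriv^[j + 3] (F14 t 0) l = deriv^[j + 2] (φ1 t) l := iter_shift (Ev1 t hl) (j + 2)
  have h2 : deriv^[j + 2] (φ1 t) l = deriv^[j + 1] (φ2 : ℝ → ℝ) l := iter_shift (Ev2 t hl) (j + 1)
  have h3 : deriv^[j + 1] (φ2 : ℝ → ℝ) l = deriv^[j] (Inv.inv : ℝ → ℝ) l := iter_shift (Ev3 hl) j
  rw [h1, h2, h3, iter_deriv_inv, FreeEnergy14.prod_neg]

lemma F1_iter (t : ℝ) (l : ℝ) (j : ℕ) :
    deriv^[j + 1] (F14 t 1) l =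
      -(1 / 12) * ((∏ i ∈ range j, (-1 - (i : ℝ))) * l ^ (-1 - (j : ℤ))) := by
  have h0 : F14 t 1 = fun x => -(1 / 12) * Real.log x := rfl
  rw [h0, iter_deriv_const_mul]
  show -(1 / 12) * deriv^[j + 1] Real.log l = _
  rw [Function.iterate_succ_apply, Real.deriv_log', iter_deriv_inv, FreeEnergy14.prod_neg]

lemma Fg_iter (t : ℝ) (l : ℝ) (g n : ℕ) :
    deriv^[n] (F14 t (g + 2)) l =
      ((bernoulli (2 * (g + 2)) : ℝ) / ((2 * (g + 2) : ℝ) * ((2 * (g + 2) : ℝ) - 2)))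
        * ((∏ i ∈ range n, (((2 : ℤ) - 2 * ((g : ℤ) + 2) : ℤ) - (i : ℝ))) *
            l ^ (((2 : ℤ) - 2 * ((g : ℤ) + 2)) - (n : ℤ))) := by
  have h0 : F14 t (g + 2) = fun x =>
      ((bernoulli (2 * (g + 2)) : ℝ) / ((2 * (g + 2) : ℝ) * ((2 * (g + 2) : ℝ) - 2)))
        * x ^ ((2 : ℤ) - 2 * ((g : ℤ) + 2)) := rfl
  rw [h0, iter_deriv_const_mul]
  show _ * deriv^[n] (fun y : ℝ => y ^ ((2 : ℤ) - 2 * ((g : ℤ) + 2))) l = _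
  rw [iter_deriv_zpow]

end FreeEnergy14

open Finset FreeEnergy14 in
/-- For all `t ∈ ℝ` and `λ > 0`:
(i) `F₀''(λ) = (1/2)·log(3λ²)`; and
(ii) for every even `k ≥ 2`,
`∑_{(g,n) : g ≥ 0, n ≥ 2 even, 2g−2+n = k} (2/n!)·F_g⁽ⁿ⁾(λ) = 0`,
i.e. the series `F(λ;ℏ) = ∑_g ℏ^{2g−2} F_g(λ)` satisfies the three-term difference
equation `F(λ+ℏ) − 2F(λ) + F(λ−ℏ) = ∂²F₀/∂λ²` upon Taylor expansion in `ℏ`. -/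
theorem free_energy_three_term_14 (t l : ℝ) (hl : 0 < l) :
    deriv (deriv (F14 t 0)) l = (1 / 2) * Real.log (3 * l ^ 2)
    ∧ ∀ k : ℕ, Even k → 2 ≤ k →
        ∑ p ∈ (Finset.range (k + 3) ×ˢ Finset.range (k + 3)).filter
            (fun p => 2 ≤ p.2 ∧ Even p.2 ∧ 2 * p.1 + p.2 = k + 2),
          (2 / (p.2.factorial : ℝ)) * iteratedDeriv p.2 (F14 t p.1) l = 0 := by
  constructor
  · rw [(Ev1 t hl).deriv_eq, (hasDerivφ1 t hl).deriv]
    rfl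
  · intro k hke hk2
    have hk0 : k % 2 = 0 := Nat.even_iff.mp hke
    obtain ⟨m, rfl⟩ : ∃ m, k = 2 * m := ⟨k / 2, by omega⟩
    have hm : 1 ≤ m := by omega
    have hset : (Finset.range (2 * m + 3) ×ˢ Finset.range (2 * m + 3)).filter
          (fun p => 2 ≤ p.2 ∧ Even p.2 ∧ 2 * p.1 + p.2 = 2 * m + 2)
        = Finset.image (fun g => (g, 2 * m + 2 - 2 * g)) (Finset.range (m + 1)) := by
      ext ⟨a, b⟩
      simp only [Finset.mem_filter, Finset.mem_product, Finset.mem_range, Finset.mem_image,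
        Nat.even_iff, Prod.mk.injEq]
      constructor
      · rintro ⟨⟨ha, hb⟩, h2, he, hs⟩
        exact ⟨a, by omega, rfl, by omega⟩
      · rintro ⟨g, hg, rfl, rfl⟩
        refine ⟨⟨by omega, by omega⟩, by omega, by omega, by omega⟩
    rw [hset, Finset.sum_image (fun x _ y _ h => by simpa using (Prod.mk.injEq _ _ _ _ ▸ h).1)]
    have key : ∀ g ∈ Finset.range (m + 1),
        (2 / ((2 * m + 2 - 2 * g).factorial : ℝ)) *
            iteratedDeriv (2 * m + 2 - 2 * g) (F14 t g) l
          = (2 * ((2 * m - 1).factorial : ℝ) / ((2 * m + 2).factorial : ℝ)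
                * l ^ (-(2 * (m : ℤ)))) *
              (((2 * (g : ℝ)) - 1) * (((2 * m + 2).choose (2 * g) : ℕ) : ℝ)
                * ((bernoulli (2 * g) : ℚ) : ℝ)) := by
      intro g hg
      rw [Finset.mem_range] at hg
      rw [iteratedDeriv_eq_iterate]
      match g with
      | 0 =>
          rw [show 2 * m + 2 - 2 * 0 = (2 * m - 1) + 3 by omega]
          rw [F0_iter t hl (2 * m - 1), prod_neg]
          rw [show (2 * m - 1) + 3 = 2 * m + 2 by omega]
          rw [show (-1 - ((2 * m - 1 : ℕ) : ℤ)) = -(2 * (m : ℤ)) by omega]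
          have ho : ((-1 : ℝ)) ^ (2 * m - 1) = -1 := Odd.neg_one_pow ⟨m - 1, by omega⟩
          have hbig : ((2 * m + 2).factorial : ℝ)
              = (2 * m + 2) * (2 * m + 1) * (2 * m) * ((2 * m - 1).factorial : ℝ) := by
            rw [show 2 * m + 2 = ((2 * m - 1) + 2) + 1 by omega, Nat.factorial_succ,
              Nat.factorial_succ, Nat.factorial_succ]
            push_cast [Nat.cast_sub (show 1 ≤ 2 * m by omega)]
            ring
          rw [hbig, ho]
          simp only [Nat.mul_zero, Nat.choose_zero_right, bernoulli_zero, Nat.cast_zero,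
            Nat.cast_one, Rat.cast_one]
          have h1 : ((2 * m - 1).factorial : ℝ) ≠ 0 := Nat.cast_ne_zero.2 (Nat.factorial_ne_zero _)
          field_simp
          norm_num
      | 1 =>
          rw [show 2 * m + 2 - 2 * 1 = (2 * m - 1) + 1 by omega]
          rw [F1_iter t l (2 * m - 1), FreeEnergy14.prod_neg]
          rw [show (2 * m - 1) + 1 = 2 * m by omega]
          rw [show (-1 - ((2 * m - 1 : ℕ) : ℤ)) = -(2 * (m : ℤ)) by omega]
          have ho : ((-1 : ℝ)) ^ (2 * m - 1) = -1 := Odd.neg_one_pow ⟨m - 1, by omega⟩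
          have hb2 : bernoulli (2 * 1) = 1 / 6 := by
            rw [bernoulli_eq_bernoulli'_of_ne_one (by norm_num), bernoulli'_two]
          have hch : (((2 * m + 2).choose (2 * 1) : ℕ) : ℝ)
              = ((2 * m + 2).factorial : ℝ) /
                  (((2 * 1).factorial : ℝ) * ((2 * m + 2 - 2 * 1).factorial : ℝ)) :=
            Nat.cast_choose ℝ (by omega)
          rw [hch, show 2 * m + 2 - 2 * 1 = 2 * m by omega, hb2, ho]
          have hbig : ((2 * m + 2).factorial : ℝ)
              = (2 * m + 2) * (2 * m + 1) * ((2 * m).factorial : ℝ) := by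
            rw [show 2 * m + 2 = (2 * m + 1) + 1 by omega, Nat.factorial_succ,
              show 2 * m + 1 = 2 * m + 1 from rfl, Nat.factorial_succ]
            push_cast
            ring
          have hbig2 : ((2 * m).factorial : ℝ) = (2 * m) * ((2 * m - 1).factorial : ℝ) := by
            rw [show 2 * m = (2 * m - 1) + 1 by omega, Nat.factorial_succ]
            push_cast [Nat.cast_sub (show 1 ≤ 2 * m by omega)]
            ring
          rw [hbig, hbig2]
          have h1 : ((2 * m - 1).factorial : ℝ) ≠ 0 := Nat.cast_ne_zero.2 (Nat.factorial_ne_zero _)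
          have h2 : (0 : ℝ) < m := by exact_mod_cast Nat.cast_pos.2 (by omega)
          field_simp
          ring
      | (j + 2) =>
          obtain ⟨d, hd⟩ : ∃ d, m = j + d + 2 := ⟨m - j - 2, by omega⟩
          rw [show 2 * m + 2 - 2 * (j + 2) = 2 * d + 2 by omega]
          rw [Fg_iter t l j (2 * d + 2)]
          have hprod : ∏ i ∈ range (2 * d + 2), ((((2 : ℤ) - 2 * ((j : ℤ) + 2) : ℤ) : ℝ) - (i : ℕ))
              = ∏ i ∈ range (2 * d + 2), (-((2 * j + 1 : ℕ) : ℝ) - 1 - (i : ℕ)) :=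
            Finset.prod_congr rfl fun i _ => by push_cast; ring
          rw [hprod, prod_desc]
          rw [show (2 * j + 1) + (2 * d + 2) = 2 * m - 1 by omega]
          rw [show ((2 : ℤ) - 2 * ((j : ℤ) + 2)) - ((2 * d + 2 : ℕ) : ℤ) = -(2 * (m : ℤ)) by omega]
          have he : ((-1 : ℝ)) ^ (2 * d + 2) = 1 := Even.neg_one_pow ⟨d + 1, by ring⟩
          rw [he]
          have hch : (((2 * m + 2).choose (2 * (j + 2)) : ℕ) : ℝ)
              = ((2 * m + 2).factorial : ℝ) /
                  (((2 * (j + 2)).factorial : ℝ) * ((2 * m + 2 - 2 * (j + 2)).factorial : ℝ)) :=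
            Nat.cast_choose ℝ (by omega)
          rw [hch, show 2 * m + 2 - 2 * (j + 2) = 2 * d + 2 by omega]
          have hfacG : ((2 * (j + 2)).factorial : ℝ)
              = (2 * j + 4) * (2 * j + 3) * (2 * j + 2) * ((2 * j + 1).factorial : ℝ) := by
            rw [show 2 * (j + 2) = ((2 * j + 2) + 1) + 1 by omega, Nat.factorial_succ,
              Nat.factorial_succ, Nat.factorial_succ]
            push_cast
            ring
          rw [hfacG]
          rw [show ((2 : ℝ) * (↑j + 2)) * ((2 : ℝ) * (↑j + 2) - 2) = (2*(j:ℝ)+4) * (2*(j:ℝ)+2)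
            from by ring]
          have h5 : (2*(j:ℝ) + 4) ≠ 0 := by positivity
          have h6 : (2*(j:ℝ) + 2) ≠ 0 := by positivity
          have h1 : ((2 * j + 1).factorial : ℝ) ≠ 0 := Nat.cast_ne_zero.2 (Nat.factorial_ne_zero _)
          have h2 : ((2 * d + 2).factorial : ℝ) ≠ 0 := Nat.cast_ne_zero.2 (Nat.factorial_ne_zero _)
          have h3 : ((2 * m + 2).factorial : ℝ) ≠ 0 := Nat.cast_ne_zero.2 (Nat.factorial_ne_zero _)
          have h4 : ((2 * m - 1).factorial : ℝ) ≠ 0 := Nat.cast_ne_zero.2 (Nat.factorial_ne_zero _)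
          push_cast
          field_simp
          ring
    rw [Finset.sum_congr rfl key, ← Finset.mul_sum, bern_sum_real m hm, mul_zero]
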